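/- If G is an abelian group whose endomorphism ring End(G) is nil-clean, then there exists a positive integer k such that 2ᵏ·g = 0 for all g ∈ G; in particular G is a bounded abelian 2-group. -/

import Mathlib

/-- An element of a ring is nil-clean if it is the sum of an idempotent and a nilpotent. -/
def IsNilCleanRing (R : Type*) [Ring R] : Prop :=
  ∀ a : R, ∃ e n : R, IsIdempotentElem e ∧ IsNilpotent n ∧ a = e + n

theorem bounded_two_group_of_nilClean_end (G : Type*) [AddCommGroup G]
    (h : IsNilCleanRing (AddMonoid.End G)) :
    ∃ k : ℕ, 0 < k ∧ ∀ g : G, (2 ^ k : ℕ) • g = 0 := by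
  obtain ⟨e, n, he, hn, hsum⟩ := h (-1)
  have he' : e = -1 - n := eq_sub_of_add_eq hsum.symm
  have h1 : (-1 - n) * (-1 - n) = -1 - n := he' ▸ he
  have h2 : n * n + n + n + 1 = -1 - n := by rw [← h1]; noncomm_ring
  have h4 : n * n + 3 * n + 2 = 0 := by
    rw [show n * n + 3 * n + 2 = n * n + n + n + 1 + (n + 1) by noncomm_ring; simp [two_smul]; norm_num, h2]
    noncomm_ring
  have h5 : n * (n + 3) + 2 = 0 := by
    rw [show n * (n + 3) + 2 = n * n + 3 * n + 2 by noncomm_ring]; exact h4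
  have key : (2 : AddMonoid.End G) = -(n * (n + 3)) := eq_neg_of_add_eq_zero_right h5
  have h2nil : IsNilpotent (2 : AddMonoid.End G) := by
    rw [key]
    exact (Commute.isNilpotent_mul_right ((Commute.refl n).add_right (Commute.ofNat_right n 3)) hn).neg
  obtain ⟨m, hm⟩ := h2nil
  refine ⟨m + 1, Nat.succ_pos m, fun g => ?_⟩
  have hz : (2 : AddMonoid.End G) ^ (m + 1) = 0 := by rw [pow_succ, hm, zero_mul]
  have hc : ((2 ^ (m + 1) : ℕ) : AddMonoid.End G) = 0 := by push_cast; rw [hz]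
  rw [← AddMonoid.End.natCast_apply, hc]
  rfl
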